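/- Every finitely generated nilpotent group is Hopfian. -/

import Mathlib

open Subgroup hiding lowerCentralSeries nilpotent_iff_lowerCentralSeries lowerCentralSeries_antitone
open scoped commutatorElement

universe u

private lemma map_lcs_eq {G H : Type*} [Group G] [Group H] (f : G →* H)
    (hf : Function.Surjective f) (n : ℕ) :
    ((⊤ : Subgroup G).lowerCentralSeries n).map f = (⊤ : Subgroup H).lowerCentralSeries n := by
  induction n with
  | zero => exact Subgroup.map_top_of_surjective f hf
  | succ n ih =>
    show (⁅(⊤ : Subgroup G).lowerCentralSeries n, ⊤⁆ : Subgroup G).map f = ⁅(⊤ : Subgroup H).lowerCentralSeries n, ⊤⁆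
    rw [Subgroup.map_commutator, ih, Subgroup.map_top_of_surjective f hf]

/-- Key lemma: each term of the lower central series of an f.g. nilpotent group is
finitely generated modulo the next term. -/
private lemma lcs_step_fg (G : Type*) [Group G] [Group.FG G] [Group.IsNilpotent G] (i : ℕ) :
    ∃ T : Finset G, (↑T : Set G) ⊆ (⊤ : Subgroup G).lowerCentralSeries i ∧
      (⊤ : Subgroup G).lowerCentralSeries i ≤ (⊤ : Subgroup G).lowerCentralSeries (i + 1) ⊔ closure (↑T : Set G) := by
  classical
  obtain ⟨S, hS⟩ := Group.fg_def.mp ‹Group.FG G›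
  induction i with
  | zero =>
    exact ⟨S, by simp, by rw [hS]; exact le_sup_right⟩
  | succ i ih =>
    obtain ⟨T, hT1, hT2⟩ := ih
    refine ⟨(T ×ˢ S).image fun p => ⁅p.1, p.2⁆, ?_, ?_⟩
    · intro x hx
      simp only [Finset.coe_image, Set.mem_image, Finset.mem_coe, Finset.mem_product] at hx
      obtain ⟨⟨t, s⟩, ⟨ht, _⟩, rfl⟩ := hx
      exact commutator_mem_commutator (hT1 ht) (mem_top s)
    · -- `M` is the candidate subgroup
      set T' : Finset G := (T ×ˢ S).image fun p => ⁅p.1, p.2⁆ with hT'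
      set M : Subgroup G := (⊤ : Subgroup G).lowerCentralSeries (i + 2) ⊔ closure (↑T' : Set G) with hM
      have hT'sub : (↑T' : Set G) ⊆ (⊤ : Subgroup G).lowerCentralSeries (i + 1) := by
        intro x hx
        simp only [hT', Finset.coe_image, Set.mem_image, Finset.mem_coe,
          Finset.mem_product] at hx
        obtain ⟨⟨t, s⟩, ⟨ht, _⟩, rfl⟩ := hx
        exact commutator_mem_commutator (hT1 ht) (mem_top s)
      have hMle : M ≤ (⊤ : Subgroup G).lowerCentralSeries (i + 1) :=
        sup_le (lowerCentralSeries_antitone _ (by omega)) ((closure_le _).mpr hT'sub)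
      haveI : M.Normal := by
        constructor
        intro m hm g
        have hc : ⁅g, m⁆ ∈ (⊤ : Subgroup G).lowerCentralSeries (i + 2) := by
          have : ⁅g, m⁆ ∈ ⁅(⊤ : Subgroup G), (⊤ : Subgroup G).lowerCentralSeries (i + 1)⁆ :=
            commutator_mem_commutator (mem_top g) (hMle hm)
          rwa [Subgroup.commutator_comm] at this
        have : g * m * g⁻¹ = ⁅g, m⁆ * m := by group
        rw [this]
        exact M.mul_mem (le_sup_left (a := (⊤ : Subgroup G).lowerCentralSeries (i + 2)) hc) hm
      -- pass to the quotient
      set π : G →* G ⧸ M := QuotientGroup.mk' M with hπ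
      have hπs : Function.Surjective π := QuotientGroup.mk'_surjective M
      -- images of T are central in the quotient
      have hTcent : ∀ t ∈ T, π t ∈ center (G ⧸ M) := by
        intro t ht
        rw [Subgroup.mem_center_iff]
        intro q
        obtain ⟨g, rfl⟩ := hπs q
        have hg : g ∈ closure (↑S : Set G) := by rw [hS]; trivial
        induction hg using closure_induction with
        | mem s hs =>
          have : ⁅t, s⁆ ∈ M := le_sup_right (a := (⊤ : Subgroup G).lowerCentralSeries (i + 2))
            (subset_closure (by
              simp only [hT', Finset.coe_image, Set.mem_image, Finset.mem_coe,
                Finset.mem_product]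
              exact ⟨⟨t, s⟩, ⟨ht, hs⟩, rfl⟩))
          have h1 : ⁅π t, π s⁆ = 1 := by
            rw [← map_commutatorElement]
            exact (QuotientGroup.eq_one_iff _).mpr this
          exact (commutatorElement_eq_one_iff_commute.mp h1).symm.eq
        | one => simp
        | mul a b _ _ iha ihb => rw [map_mul, mul_assoc, ihb, ← mul_assoc, iha, mul_assoc]
        | inv a _ iha =>
          rw [map_inv]
          exact (Commute.inv_right ((Commute.eq iha.symm))).symm.eq
      -- the i-th term in the quotient is contained in (i+1)-th term ⊔ center
      have h2 : (⊤ : Subgroup (G ⧸ M)).lowerCentralSeries i ≤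
          (⊤ : Subgroup (G ⧸ M)).lowerCentralSeries (i + 1) ⊔ center (G ⧸ M) := by
        rw [← map_lcs_eq π hπs i]
        calc ((⊤ : Subgroup G).lowerCentralSeries i).map π
            ≤ ((⊤ : Subgroup G).lowerCentralSeries (i + 1) ⊔ closure (↑T : Set G)).map π :=
              Subgroup.map_mono hT2
          _ = ((⊤ : Subgroup G).lowerCentralSeries (i + 1)).map π ⊔ (closure (↑T : Set G)).map π :=
              Subgroup.map_sup _ _ _
          _ ≤ (⊤ : Subgroup (G ⧸ M)).lowerCentralSeries (i + 1) ⊔ center (G ⧸ M) := by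
              apply sup_le_sup
              · rw [map_lcs_eq π hπs]
              · rw [MonoidHom.map_closure]
                apply (closure_le _).mpr
                rintro x ⟨t, ht, rfl⟩
                exact hTcent t ht
      -- hence the (i+1)-st term in the quotient is contained in the (i+2)-nd
      have h3 : (⊤ : Subgroup (G ⧸ M)).lowerCentralSeries (i + 1) ≤ (⊤ : Subgroup (G ⧸ M)).lowerCentralSeries (i + 2) := by
        show (⁅(⊤ : Subgroup (G ⧸ M)).lowerCentralSeries i, ⊤⁆ : Subgroup (G ⧸ M)) ≤ _
        rw [Subgroup.commutator_le]
        intro x hx g _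
        have hx' : x ∈ (↑((⊤ : Subgroup (G ⧸ M)).lowerCentralSeries (i + 1) ⊔ center (G ⧸ M)) : Set (G ⧸ M)) :=
          h2 hx
        rw [Subgroup.mul_normal] at hx'
        obtain ⟨h, hh, z, hz, rfl⟩ := hx'
        have hzc : ∀ w, w * z = z * w := Subgroup.mem_center_iff.mp hz
        have : ⁅h * z, g⁆ = ⁅h, g⁆ := by
          simp only [commutatorElement_def, mul_inv_rev]
          rw [mul_assoc h z g, ← hzc g]
          group
        rw [this]
        exact commutator_mem_commutator hh (mem_top g)
      -- nilpotency forces the (i+1)-st term of the quotient to vanish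
      have h4 : (⊤ : Subgroup (G ⧸ M)).lowerCentralSeries (i + 1) = ⊥ := by
        have heq : (⊤ : Subgroup (G ⧸ M)).lowerCentralSeries (i + 1) = (⊤ : Subgroup (G ⧸ M)).lowerCentralSeries (i + 2) :=
          le_antisymm h3 (lowerCentralSeries_antitone _ (by omega))
        have hstab : ∀ k, (⊤ : Subgroup (G ⧸ M)).lowerCentralSeries (i + 1 + k) =
            (⊤ : Subgroup (G ⧸ M)).lowerCentralSeries (i + 1) := by
          intro k
          induction k with
          | zero => rfl
          | succ k ihk =>
            show (⁅(⊤ : Subgroup (G ⧸ M)).lowerCentralSeries (i + 1 + k), ⊤⁆ : Subgroup (G ⧸ M)) = _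
            rw [ihk]
            exact heq.symm
        obtain ⟨n, hn⟩ := nilpotent_iff_lowerCentralSeries.mp
          (nilpotent_of_surjective π hπs)
        rw [← hstab n]
        exact le_bot_iff.mp (hn ▸ lowerCentralSeries_antitone _ (by omega))
      -- conclude
      have : ((⊤ : Subgroup G).lowerCentralSeries (i + 1)).map π = ⊥ := by
        rw [map_lcs_eq π hπs, h4]
      rw [Subgroup.map_eq_bot_iff, hπ, QuotientGroup.ker_mk'] at this
      exact this

/-- A finitely generated abelian group is Hopfian. -/
private lemma comm_group_hopfian (A : Type*) [CommGroup A] [Group.FG A] (ψ : A →* A)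
    (hψ : Function.Surjective ψ) : Function.Injective ψ := by
  let f : Additive A →+ Additive A := MonoidHom.toAdditive ψ
  haveI : Module.Finite ℤ (Additive A) :=
    Module.Finite.iff_addGroup_fg.mpr inferInstance
  exact OrzechProperty.injective_of_surjective_endomorphism f.toIntLinearMap hψ

private lemma hopf_aux (n : ℕ) : ∀ (G : Type u) [Group G] [Group.FG G] [Group.IsNilpotent G],
    (⊤ : Subgroup G).lowerCentralSeries n = ⊥ → ∀ φ : G →* G, Function.Surjective φ →
    Function.Injective φ := by
  induction n with
  | zero =>
    intro G _ _ _ h φ _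
    have htriv : ∀ x : G, x = 1 := by
      intro x
      have : x ∈ (⊥ : Subgroup G) := h ▸ mem_top x
      simpa using this
    intro a b _
    rw [htriv a, htriv b]
  | succ n ih =>
    intro G _ _ _ h φ hφ
    set N : Subgroup G := (⊤ : Subgroup G).lowerCentralSeries n with hN
    have hNcent : ∀ x ∈ N, x ∈ center G := by
      intro x hx
      rw [Subgroup.mem_center_iff]
      intro g
      have : ⁅x, g⁆ ∈ (⊤ : Subgroup G).lowerCentralSeries (n + 1) :=
        commutator_mem_commutator hx (mem_top g)
      rw [h] at this
      simp only [Subgroup.mem_bot] at this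
      exact (commutatorElement_eq_one_iff_commute.mp this).symm.eq
    -- N is finitely generated
    have hNfg : N.FG := by
      obtain ⟨T, hT1, hT2⟩ := lcs_step_fg G n
      refine ⟨T, le_antisymm ((closure_le _).mpr hT1) ?_⟩
      intro x hx
      have := hT2 hx
      rwa [h, bot_sup_eq] at this
    haveI : Group.FG N := (Group.fg_iff_subgroup_fg N).mpr hNfg
    -- φ maps N onto N
    have hmap : N.map φ = N := map_lcs_eq φ hφ n
    have hmem : ∀ x : N, φ (x : G) ∈ N := fun x => hmap.le (mem_map_of_mem φ x.2)
    let ψ : N →* N := (φ.domRestrict N).codRestrict N hmem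
    have hψs : Function.Surjective ψ := by
      intro y
      have : (y : G) ∈ N.map φ := by rw [hmap]; exact y.2
      obtain ⟨x, hx, hxy⟩ := this
      exact ⟨⟨x, hx⟩, Subtype.ext hxy⟩
    letI : CommGroup N :=
      { (inferInstance : Group N) with
        mul_comm := fun a b => Subtype.ext
          ((Subgroup.mem_center_iff.mp (hNcent a a.2) b).symm) }
    have hψinj : Function.Injective ψ := comm_group_hopfian N ψ hψs
    -- the induced map on the quotient is injective by induction
    have hle : N ≤ N.comap φ := fun x hx => by
      rw [Subgroup.mem_comap]
      exact hmem ⟨x, hx⟩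
    let φbar : G ⧸ N →* G ⧸ N := QuotientGroup.map N N φ hle
    have hφbars : Function.Surjective φbar := by
      intro q
      obtain ⟨g, rfl⟩ := QuotientGroup.mk'_surjective N q
      obtain ⟨x, rfl⟩ := hφ g
      exact ⟨QuotientGroup.mk x, rfl⟩
    have hQbot : (⊤ : Subgroup (G ⧸ N)).lowerCentralSeries n = ⊥ := by
      rw [← map_lcs_eq (QuotientGroup.mk' N) (QuotientGroup.mk'_surjective N) n,
        Subgroup.map_eq_bot_iff, QuotientGroup.ker_mk']
    have hφbarinj := ih (G ⧸ N) hQbot φbar hφbars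
    -- finish
    rw [injective_iff_map_eq_one]
    intro a ha
    have hmk : (QuotientGroup.mk' N a : G ⧸ N) = 1 := by
      have h2 : φbar (QuotientGroup.mk' N a) = φbar 1 := by
        show QuotientGroup.map N N φ hle (QuotientGroup.mk' N a) =
          QuotientGroup.map N N φ hle 1
        rw [QuotientGroup.map_mk' N N φ hle a, ha]
        simp
      exact hφbarinj h2
    have haN : a ∈ N := (QuotientGroup.eq_one_iff a).mp hmk
    have h1 : ψ ⟨a, haN⟩ = ψ 1 := by
      rw [map_one]; exact Subtype.ext ha
    exact congrArg Subtype.val (hψinj h1)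

/-- Every finitely generated nilpotent group is Hopfian: every surjective
endomorphism is an isomorphism. -/
theorem fg_nilpotent_hopfian (G : Type*) [Group G] [Group.FG G] [Group.IsNilpotent G]
    (φ : G →* G) (hφ : Function.Surjective φ) : Function.Bijective φ := by
  refine ⟨?_, hφ⟩
  obtain ⟨n, hn⟩ := nilpotent_iff_lowerCentralSeries.mp ‹Group.IsNilpotent G›
  exact hopf_aux n G hn φ hφ
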